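/- arXiv:1008.5083 — 4 statements merged into one kernel-verified Lean document; each statement's English description precedes it below -/
import Mathlib

section
/- Let V be a finite-dimensional real vector space with a nondegenerate symmetric bilinear form g of indefinite signature (both positive and negative indices at least 1), dim V ≥ 3. If Q is a symmetric bilinear form on V such that Q(ξ,ξ) = 0 for every isotropic vector ξ (i.e. every nonzero ξ with g(ξ,ξ)=0), then Q = c·g for some real constant c. -/
/-- Dajczer–Nomizu lemma: a symmetric bilinear form vanishing on the null cone of a
nondegenerate indefinite symmetric bilinear form is a scalar multiple of it. -/
theorem stmt_0 {V : Type*} [AddCommGroup V] [Module ℝ V] [FiniteDimensional ℝ V]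
    (hdim : 3 ≤ Module.finrank ℝ V)
    (g Q : V →ₗ[ℝ] V →ₗ[ℝ] ℝ)
    (hg_symm : ∀ x y, g x y = g y x)
    (hg_nondeg : ∀ x, (∀ y, g x y = 0) → x = 0)
    (hpos : ∃ x, 0 < g x x) (hneg : ∃ x, g x x < 0)
    (hQ_symm : ∀ x y, Q x y = Q y x)
    (hQ0 : ∀ ξ : V, ξ ≠ 0 → g ξ ξ = 0 → Q ξ ξ = 0) :
    ∃ c : ℝ, Q = c • g := by
  -- Key lemma: cross relation between positive and negative vectors
  have key : ∀ x y : V, 0 < g x x → g y y < 0 →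
      Q x x * g y y = Q y y * g x x := by
    intro x y hx hy
    have hdne : g y y ≠ 0 := ne_of_lt hy
    have hdisc : 0 < (g x y)^2 - (g x x)*(g y y) := by nlinarith
    set s := Real.sqrt ((g x y)^2 - (g x x)*(g y y)) with hsdef
    have hs : s^2 = (g x y)^2 - (g x x)*(g y y) := Real.sq_sqrt hdisc.le
    have hspos : 0 < s := Real.sqrt_pos.mpr hdisc
    have gexp : ∀ p q : ℝ, g (p • x + q • y) (p • x + q • y)
        = p^2*(g x x) + 2*p*q*(g x y) + q^2*(g y y) := by
      intro p q
      simp only [map_add, map_smul, LinearMap.add_apply, LinearMap.smul_apply, smul_eq_mul]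
      rw [hg_symm y x]; ring
    have Qexp : ∀ p q : ℝ, Q (p • x + q • y) (p • x + q • y)
        = p^2*(Q x x) + 2*p*q*(Q x y) + q^2*(Q y y) := by
      intro p q
      simp only [map_add, map_smul, LinearMap.add_apply, LinearMap.smul_apply, smul_eq_mul]
      rw [hQ_symm y x]; ring
    have hnz : ∀ r : ℝ, (g y y) • x + r • y ≠ 0 := by
      intro r h
      have h1 : (g y y) • x = -(r • y) := by
        rwa [add_eq_zero_iff_eq_neg] at h
      have h2 : g ((g y y) • x) ((g y y) • x) = g (-(r • y)) (-(r • y)) := by rw [h1]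
      simp only [map_smul, map_neg, LinearMap.smul_apply, LinearMap.neg_apply, smul_eq_mul,
        neg_neg, mul_neg, neg_mul] at h2
      nlinarith [h2, mul_pos (mul_self_pos.mpr hdne) hx, mul_self_nonneg r]
    have main : ∀ r : ℝ, r^2 + 2*r*(g x y) + (g x x)*(g y y) = 0 →
        (g y y)^2*(Q x x) + 2*(g y y)*r*(Q x y) + r^2*(Q y y) = 0 := by
      intro r hr
      have hgz : g ((g y y) • x + r • y) ((g y y) • x + r • y) = 0 := by
        rw [gexp]; linear_combination (g y y) * hr
      have hQz := hQ0 _ (hnz r) hgz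
      rw [Qexp] at hQz
      linear_combination hQz
    have f1 := main (s - g x y) (by linear_combination hs)
    have f2 := main (-s - g x y) (by linear_combination hs)
    have hB : (g y y) * (Q x y) = (g x y) * (Q y y) := by
      have h : 4*s*((g y y)*(Q x y) - (g x y)*(Q y y)) = 0 := by
        linear_combination f1 - f2
      rcases mul_eq_zero.mp h with h' | h'
      · exfalso; nlinarith
      · linarith
    have hE : (Q x x * g y y - Q y y * g x x) * (2 * g y y) = 0 := by
      linear_combination f1 + f2 + 4*(g x y)*hB - 2*(Q y y)*hs
    rcases mul_eq_zero.mp hE with h' | h'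
    · linarith
    · exfalso; apply hdne; linarith
  obtain ⟨x₀, hx₀⟩ := hpos
  obtain ⟨y₀, hy₀⟩ := hneg
  have hgx₀ : g x₀ x₀ ≠ 0 := ne_of_gt hx₀
  have hgy₀ : g y₀ y₀ ≠ 0 := ne_of_lt hy₀
  set c : ℝ := Q x₀ x₀ / g x₀ x₀ with hc
  have hcx₀ : Q x₀ x₀ = c * g x₀ x₀ := by rw [hc, div_mul_cancel₀ _ hgx₀]
  have hcy₀ : Q y₀ y₀ = c * g y₀ y₀ := by
    have h := key x₀ y₀ hx₀ hy₀
    field_simp [hc] at *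
    nlinarith [h]
  have hdiag : ∀ x : V, Q x x = c * g x x := by
    intro x
    rcases lt_trichotomy (g x x) 0 with h | h | h
    · have hk := key x₀ x hx₀ h
      have hne : g x x ≠ 0 := ne_of_lt h
      rw [hcx₀] at hk
      have h' : Q x x * g x₀ x₀ = (c * g x x) * g x₀ x₀ := by linear_combination -hk
      exact mul_right_cancel₀ hgx₀ h'
    · by_cases hx : x = 0
      · subst hx; simp
      · rw [hQ0 x hx h, h]; ring
    · have hk := key x y₀ h hy₀
      rw [hcy₀] at hk
      have : Q x x * g y₀ y₀ = c * g x x * g y₀ y₀ := by linarith [hk]; 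
      exact mul_right_cancel₀ hgy₀ this
  refine ⟨c, ?_⟩
  apply LinearMap.ext; intro x
  apply LinearMap.ext; intro y
  have h1 := hdiag (x + y)
  have h2 := hdiag x
  have h3 := hdiag y
  simp only [map_add, LinearMap.add_apply] at h1
  rw [hQ_symm y x, hg_symm y x] at h1
  simp only [LinearMap.smul_apply, smul_eq_mul]
  linarith
end

section
/- Let V be a finite-dimensional real vector space with a nondegenerate indefinite symmetric bilinear form g. If Q is a symmetric bilinear form on V that is not a scalar multiple of g, then there exists an isotropic vector ξ with Q(ξ,ξ) ≠ 0. -/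
/-- Contrapositive Dajczer–Nomizu: if a symmetric bilinear form is not a multiple of the
nondegenerate indefinite form g, it is nonzero on some isotropic vector. -/
theorem stmt_1 {V : Type*} [AddCommGroup V] [Module ℝ V] [FiniteDimensional ℝ V]
    (hdim : 3 ≤ Module.finrank ℝ V)
    (g Q : V →ₗ[ℝ] V →ₗ[ℝ] ℝ)
    (hg_symm : ∀ x y, g x y = g y x)
    (hg_nondeg : ∀ x, (∀ y, g x y = 0) → x = 0)
    (hpos : ∃ x, 0 < g x x) (hneg : ∃ x, g x x < 0)
    (hQ_symm : ∀ x y, Q x y = Q y x)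
    (hQ : ∀ c : ℝ, Q ≠ c • g) :
    ∃ ξ : V, ξ ≠ 0 ∧ g ξ ξ = 0 ∧ Q ξ ξ ≠ 0 := by
  by_contra hcon
  push_neg at hcon
  have hsymm : g.IsSymm := ⟨fun x y => hg_symm x y⟩
  obtain ⟨v, hv⟩ := LinearMap.BilinForm.exists_orthogonal_basis hsymm
  have hv' : ∀ i j, i ≠ j → g (v i) (v j) = 0 := fun i j hij => hv hij
  set d : Fin (Module.finrank ℝ V) → ℝ := fun i => g (v i) (v i) with hd_def
  have hd : ∀ i, d i ≠ 0 := by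
    intro i hdi
    have h0 : g (v i) = 0 := by
      apply v.ext
      intro j
      by_cases hij : i = j
      · subst hij; simpa using hdi
      · simpa using hv' i j hij
    have : v i = 0 := hg_nondeg _ (fun y => by rw [h0]; rfl)
    exact v.ne_zero i this
  have hs : ∀ i, (Real.sqrt |d i|) ≠ 0 := by
    intro i
    have : 0 < |d i| := abs_pos.mpr (hd i)
    positivity
  set u : Fin (Module.finrank ℝ V) → ℝˣ :=
    fun i => Units.mk0 ((Real.sqrt |d i|)⁻¹) (inv_ne_zero (hs i)) with hu
  set w := v.unitsSMul u with hwdef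
  set s : Fin (Module.finrank ℝ V) → ℝ := fun i => (Real.sqrt |d i|)⁻¹ with hs_def
  have hwi : ∀ i, w i = s i • v i := by
    intro i
    rw [hwdef, Module.Basis.unitsSMul_apply]
    simp [hu, hs_def, Units.smul_def]
  set ε : Fin (Module.finrank ℝ V) → ℝ := fun i => if 0 < d i then (1:ℝ) else -1 with hee
  have hε : ∀ i, ε i = 1 ∨ ε i = -1 := by
    intro i; by_cases h : 0 < d i
    · left; simp [hee, h]
    · right; simp [hee, h]
  have hgw : ∀ i j, g (w i) (w j) = s i * s j * g (v i) (v j) := by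
    intro i j
    rw [hwi, hwi]
    simp [LinearMap.map_smul, smul_eq_mul]
    ring
  have horthw : ∀ i j, i ≠ j → g (w i) (w j) = 0 := by
    intro i j hij
    rw [hgw, hv' i j hij, mul_zero]
  have hgww : ∀ i, g (w i) (w i) = ε i := by
    intro i
    have hsq : s i * s i = |d i|⁻¹ := by
      rw [hs_def]
      dsimp only
      rw [← mul_inv, Real.mul_self_sqrt (abs_nonneg _)]
    have h1 : g (w i) (w i) = |d i|⁻¹ * d i := by
      rw [hgw, hsq]
    rw [h1]
    simp only [hee]
    rcases (hd i).lt_or_gt with h | h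
    · rw [abs_of_neg h, if_neg (not_lt.mpr h.le), inv_mul_eq_div, div_neg,
        div_self (hd i)]
    · rw [abs_of_pos h, if_pos h, inv_mul_cancel₀ (hd i)]
  -- generic expansions
  have expandA : ∀ (B : V →ₗ[ℝ] V →ₗ[ℝ] ℝ) (x z : V) (c : ℝ),
      B (x + c • z) (x + c • z) = B x x + c * c * B z z + c * B x z + c * B z x := by
    intro B x z c
    simp [map_add, map_smul, LinearMap.add_apply, LinearMap.smul_apply, smul_eq_mul]
    ring
  have expand3 : ∀ (B : V →ₗ[ℝ] V →ₗ[ℝ] ℝ) (x y z : V) (c : ℝ),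
      B (x + y + c • z) (x + y + c • z) =
        B x x + B y y + c * c * B z z + B x y + B y x
          + c * B x z + c * B z x + c * B y z + c * B z y := by
    intro B x y z c
    simp [map_add, map_smul, LinearMap.add_apply, LinearMap.smul_apply, smul_eq_mul]
    ring
  -- Claim A
  have claimA : ∀ i j, ε i = 1 → ε j = -1 →
      Q (w i) (w j) = 0 ∧ Q (w i) (w i) + Q (w j) (w j) = 0 := by
    intro i j hi hj
    have hij : i ≠ j := by
      intro h; rw [h, hj] at hi; norm_num at hi
    have hne : ∀ (t : ℝ), w i + t • w j ≠ 0 := by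
      intro t h0
      have h1 : g (w i + t • w j) (w i) = 0 := by rw [h0]; simp
      rw [map_add, map_smul, LinearMap.add_apply, LinearMap.smul_apply,
        hgww, hi, horthw j i hij.symm] at h1
      simp at h1
    have hiso : ∀ (t : ℝ), t * t = 1 → g (w i + t • w j) (w i + t • w j) = 0 := by
      intro t ht
      rw [expandA, hgww, hgww, hi, hj, horthw i j hij, horthw j i hij.symm]
      linear_combination (-1 : ℝ) * ht
    have hQp := hcon _ (hne 1) (hiso 1 (by norm_num))
    have hQm := hcon _ (hne (-1)) (hiso (-1) (by norm_num))
    rw [expandA] at hQp hQm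
    have hqs := hQ_symm (w i) (w j)
    constructor <;> nlinarith [hQp, hQm, hqs]
  -- Claim B
  have claimB : ∀ i j k, i ≠ j → ε i = ε j → ε k = -ε i → Q (w i) (w j) = 0 := by
    intro i j k hij hijε hkε
    have hki : k ≠ i := by
      intro h; rw [h] at hkε
      rcases hε i with h1 | h1 <;> rw [h1] at hkε <;> norm_num at hkε
    have hkj : k ≠ j := by
      intro h; rw [h, ← hijε] at hkε
      rcases hε i with h1 | h1 <;> rw [h1] at hkε <;> norm_num at hkε
    have hsq2 : Real.sqrt 2 * Real.sqrt 2 = 2 := Real.mul_self_sqrt (by norm_num)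
    have hξne : w i + w j + Real.sqrt 2 • w k ≠ 0 := by
      intro h0
      have h1 : g (w i + w j + Real.sqrt 2 • w k) (w i) = 0 := by rw [h0]; simp
      rw [map_add, map_add, map_smul, LinearMap.add_apply, LinearMap.add_apply,
        LinearMap.smul_apply, hgww, horthw j i hij.symm, horthw k i hki] at h1
      rcases hε i with h2 | h2 <;> rw [h2] at h1 <;> simp at h1
    have hξiso : g (w i + w j + Real.sqrt 2 • w k) (w i + w j + Real.sqrt 2 • w k) = 0 := by
      rw [expand3, hgww, hgww, hgww, horthw i j hij, horthw j i hij.symm,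
        horthw i k hki.symm, horthw k i hki, horthw j k hkj.symm, horthw k j hkj]
      linear_combination (-1 : ℝ) * hijε + (ε k) * hsq2 + 2 * hkε
    have hQξ := hcon _ hξne hξiso
    rw [expand3, hsq2] at hQξ
    have hqs := hQ_symm (w i) (w j)
    rcases hε i with h1 | h1
    · have A1 := claimA i k h1 (by rw [hkε, h1])
      have A2 := claimA j k (by rw [← hijε, h1]) (by rw [hkε, h1])
      rw [A1.1, A2.1, hQ_symm (w k) (w i), hQ_symm (w k) (w j), A1.1, A2.1] at hQξ
      linarith [A1.2, A2.2, hqs, hQξ]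
    · have A1 := claimA k i (by rw [hkε, h1]; norm_num) h1
      have A2 := claimA k j (by rw [hkε, h1]; norm_num) (by rw [← hijε, h1])
      rw [A1.1, A2.1, hQ_symm (w i) (w k), hQ_symm (w j) (w k), A1.1, A2.1] at hQξ
      linarith [A1.2, A2.2, hqs, hQξ]
  -- diagonal sum formula
  have hrepr : ∀ x : V, g x x = ∑ i, (w.repr x i) * (w.repr x i) * ε i := by
    intro x
    set c := fun i => w.repr x i with hc
    have hx : x = ∑ i, c i • w i := (w.sum_repr x).symm
    calc g x x = g (∑ i, c i • w i) (∑ j, c j • w j) := by rw [← hx]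
      _ = ∑ i, c i * g (w i) (∑ j, c j • w j) := by
          rw [map_sum g (fun i => c i • w i) Finset.univ, LinearMap.sum_apply]
          exact Finset.sum_congr rfl fun i _ => by
            rw [map_smul, LinearMap.smul_apply, smul_eq_mul]
      _ = ∑ i, c i * (c i * ε i) := by
          apply Finset.sum_congr rfl
          intro i _
          congr 1
          rw [map_sum]
          rw [Finset.sum_eq_single i]
          · rw [map_smul, smul_eq_mul, hgww]
          · intro j _ hji
            rw [map_smul, smul_eq_mul, horthw i j (Ne.symm hji), mul_zero]
          · intro h; exact absurd (Finset.mem_univ i) h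
      _ = ∑ i, c i * c i * ε i := by
          apply Finset.sum_congr rfl; intros; ring
  obtain ⟨xp, hxp⟩ := hpos
  obtain ⟨xn, hxn⟩ := hneg
  obtain ⟨ip, hip⟩ : ∃ i, ε i = 1 := by
    by_contra hall
    push_neg at hall
    have hall' : ∀ i, ε i = -1 := fun i => (hε i).resolve_left (hall i)
    have : g xp xp ≤ 0 := by
      rw [hrepr]
      apply Finset.sum_nonpos
      intro i _
      rw [hall' i]
      nlinarith [sq_nonneg (w.repr xp i)]
    linarith
  obtain ⟨jn, hjn⟩ : ∃ i, ε i = -1 := by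
    by_contra hall
    push_neg at hall
    have hall' : ∀ i, ε i = 1 := fun i => (hε i).resolve_right (hall i)
    have : 0 ≤ g xn xn := by
      rw [hrepr]
      apply Finset.sum_nonneg
      intro i _
      rw [hall' i]
      nlinarith [sq_nonneg (w.repr xn i)]
    linarith
  have key : ∀ i j, Q (w i) (w j) = Q (w ip) (w ip) * g (w i) (w j) := by
    intro i j
    by_cases hij : i = j
    · subst hij
      rcases hε i with h1 | h1
      · have A1 := claimA i jn h1 hjn
        have A2 := claimA ip jn hip hjn
        rw [hgww, h1, mul_one]
        linarith [A1.2, A2.2]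
      · have A2 := claimA ip i hip h1
        rw [hgww, h1]
        linarith [A2.2]
    · rcases hε i with h1 | h1 <;> rcases hε j with h2 | h2
      · rw [claimB i j jn hij (by rw [h1, h2]) (by rw [hjn, h1]), horthw i j hij, mul_zero]
      · rw [(claimA i j h1 h2).1, horthw i j hij, mul_zero]
      · rw [hQ_symm, (claimA j i h2 h1).1, horthw i j hij, mul_zero]
      · rw [claimB i j ip hij (by rw [h1, h2]) (by rw [hip, h1]; norm_num),
          horthw i j hij, mul_zero]
  have hfinal : Q = Q (w ip) (w ip) • g := by
    apply w.ext
    intro i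
    apply w.ext
    intro j
    rw [key i j]
    simp [LinearMap.smul_apply, smul_eq_mul]
  exact hQ _ hfinal
end

section
/- Let (V,g) be an indefinite inner product space of dimension n ≥ 3, and let ḡ be another symmetric bilinear form on V such that ḡ(ξ,ξ) = 0 for all isotropic vectors ξ of g lying in some nonempty open subset of the null cone of g. Then ḡ = c·g on the span of those isotropic vectors, and if that span is all of V, ḡ = c·g globally. -/
open Polynomial


lemma key_lemma {V : Type*} [NormedAddCommGroup V] [NormedSpace ℝ V]
    (g gbar : V →ₗ[ℝ] V →ₗ[ℝ] ℝ)
    (hg_symm : ∀ x y, g x y = g y x)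
    (hgbar_symm : ∀ x y, gbar x y = gbar y x)
    (U : Set V) (hU : IsOpen U)
    (hnull : ∀ ξ ∈ U, ξ ≠ 0 → g ξ ξ = 0 → gbar ξ ξ = 0)
    (ξ₀ u w : V) (hξU : ξ₀ ∈ U) (hξ0 : ξ₀ ≠ 0) (hq : g ξ₀ ξ₀ = 0)
    (hqu : g u u = 0) (hβ : g ξ₀ u ≠ 0) :
    g ξ₀ u * gbar ξ₀ w = gbar ξ₀ u * g ξ₀ w ∧
    (g ξ₀ w = 0 → g ξ₀ u * gbar w w = gbar ξ₀ u * g w w) := by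
  set α : ℝ := g ξ₀ w with hα
  set β : ℝ := g ξ₀ u with hβdef
  set γ : ℝ := g w u with hγ
  set qw : ℝ := g w w with hqw
  set A : ℝ := gbar ξ₀ w with hA
  set B : ℝ := gbar ξ₀ u with hB
  set M : ℝ := gbar w u with hM
  set W : ℝ := gbar w w with hW
  set Q : ℝ := gbar u u with hQ
  have hA0 : gbar ξ₀ ξ₀ = 0 := hnull ξ₀ hξU hξ0 hq
  set s : ℝ → ℝ := fun t => -(t * (2*α + t*qw)) / (2*(β + t*γ)) with hs
  set ξ : ℝ → V := fun t => ξ₀ + t • w + s t • u with hξ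
  have hs0 : s 0 = 0 := by simp [hs]
  have hξcont : ContinuousAt ξ 0 := by
    apply ContinuousAt.add
    apply ContinuousAt.add continuousAt_const
    · exact (continuousAt_id.smul continuousAt_const)
    · apply ContinuousAt.smul _ continuousAt_const
      apply ContinuousAt.div (by fun_prop) (by fun_prop)
      simpa using hβ
  have hξ00 : ξ 0 = ξ₀ := by simp [hξ, hs0]
  have hev : ∀ᶠ t in nhds (0:ℝ), ξ t ∈ U ∧ ξ t ≠ 0 ∧ β + t*γ ≠ 0 := by
    have h1 : ∀ᶠ t in nhds (0:ℝ), ξ t ∈ U :=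
      hξcont.preimage_mem_nhds (hU.mem_nhds (hξ00 ▸ hξU))
    have h2 : ∀ᶠ t in nhds (0:ℝ), ξ t ≠ 0 := by
      have : {x : V | x ≠ 0} ∈ nhds (ξ 0) := by
        rw [hξ00]
        exact isOpen_compl_singleton.mem_nhds hξ0
      exact hξcont.preimage_mem_nhds this
    have h3 : ∀ᶠ t in nhds (0:ℝ), β + t*γ ≠ 0 := by
      have hc : ContinuousAt (fun t : ℝ => β + t*γ) 0 := by fun_prop
      have : {x : ℝ | x ≠ 0} ∈ nhds (β + 0*γ) := by
        apply isOpen_compl_singleton.mem_nhds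
        simpa using hβ
      exact hc.preimage_mem_nhds this
    exact h1.and (h2.and h3)
  -- the polynomial
  set p : ℝ[X] :=
      C (8*A*β^2 - 8*B*α*β) * X
    + C (16*A*β*γ + 4*W*β^2 - 8*B*α*γ - 4*B*qw*β - 8*M*α*β + 4*Q*α^2) * X^2
    + C (8*A*γ^2 + 8*W*β*γ - 4*B*qw*γ - 8*M*α*γ - 4*M*qw*β + 4*Q*α*qw) * X^3
    + C (4*W*γ^2 - 4*M*qw*γ + Q*qw^2) * X^4 with hp
  have hroot : ∀ᶠ t in nhds (0:ℝ), p.IsRoot t := by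
    filter_upwards [hev] with t ⟨htU, htne, htd⟩
    have hqt : g (ξ t) (ξ t) = 0 := by
      have hexp : g (ξ t) (ξ t)
          = t^2*qw + 2*t*α + 2*(s t)*(β + t*γ) := by
        simp only [hξ, map_add, map_smul, LinearMap.add_apply, LinearMap.smul_apply,
          smul_eq_mul]
        rw [hg_symm w ξ₀, hg_symm u ξ₀, hg_symm u w]
        rw [← hα, ← hβdef, ← hγ, ← hqw, hq, hqu]
        ring
      rw [hexp, hs]
      field_simp
      ring
    have hgt : gbar (ξ t) (ξ t) = 0 := hnull _ htU htne hqt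
    have hexp2 : gbar (ξ t) (ξ t)
        = 2*t*A + t^2*W + 2*(s t)*B + 2*t*(s t)*M + (s t)^2*Q := by
      simp only [hξ, map_add, map_smul, LinearMap.add_apply, LinearMap.smul_apply,
        smul_eq_mul]
      rw [hgbar_symm w ξ₀, hgbar_symm u ξ₀, hgbar_symm u w]
      rw [← hA, ← hB, ← hM, ← hW, ← hQ, hA0]
      ring
    have hkey : p.eval t = (4*(β + t*γ)^2) * gbar (ξ t) (ξ t) := by
      rw [hexp2, hp, hs]
      simp only [eval_add, eval_mul, eval_C, eval_pow, eval_X]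
      field_simp
      ring
    rw [Polynomial.IsRoot, hkey, hgt, mul_zero]
  have hp0 : p = 0 := by
    apply Polynomial.eq_zero_of_infinite_isRoot
    obtain ⟨ε, hε, hball⟩ := Metric.eventually_nhds_iff.mp hroot
    apply Set.Infinite.mono (s := Set.Ioo (-ε) ε)
    · intro t ht
      apply hball
      simp only [Real.dist_eq, sub_zero]
      rw [abs_lt]; exact ⟨ht.1, ht.2⟩
    · exact Set.Ioo_infinite (by linarith)
  have ha1 : 8*A*β^2 - 8*B*α*β = 0 := by
    have h := congrArg (fun q => Polynomial.coeff q 1) hp0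
    simp only [hp, Polynomial.coeff_add, Polynomial.coeff_C_mul, Polynomial.coeff_X,
      Polynomial.coeff_X_pow, Polynomial.coeff_zero] at h
    norm_num at h
    linarith [h]
  have ha2 : 16*A*β*γ + 4*W*β^2 - 8*B*α*γ - 4*B*qw*β - 8*M*α*β + 4*Q*α^2 = 0 := by
    have h := congrArg (fun q => Polynomial.coeff q 2) hp0
    simp only [hp, Polynomial.coeff_add, Polynomial.coeff_C_mul, Polynomial.coeff_X,
      Polynomial.coeff_X_pow, Polynomial.coeff_zero] at h
    norm_num at h
    linarith [h]
  constructor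
  · -- β * A = B * α
    have h8 : (8:ℝ) * β * (β * A - B * α) = 0 := by linarith [ha1]
    have : β * A - B * α = 0 := by
      rcases mul_eq_zero.mp h8 with h | h
      · rcases mul_eq_zero.mp h with h | h
        · norm_num at h
        · exact absurd h hβ
      · exact h
    linarith
  · intro hα0
    have ha1' : A * β^2 = 0 := by rw [hα0] at ha1; linarith
    have hA' : A = 0 := by
      rcases mul_eq_zero.mp ha1' with h | h
      · exact h
      · exact absurd h (pow_ne_zero _ hβ)
    have ha2' : 4*W*β^2 - 4*B*qw*β = 0 := by rw [hα0, hA'] at ha2; linarith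
    have h4 : β * (β * W - B * qw) = 0 := by linear_combination ha2' / 4
    rcases mul_eq_zero.mp h4 with h | h
    · exact absurd h hβ
    · linarith

lemma exists_null_u {V : Type*} [NormedAddCommGroup V] [NormedSpace ℝ V]
    (g : V →ₗ[ℝ] V →ₗ[ℝ] ℝ)
    (hg_symm : ∀ x y, g x y = g y x)
    (hg_nondeg : ∀ x, (∀ y, g x y = 0) → x = 0)
    (ξ : V) (hξ : ξ ≠ 0) (hq : g ξ ξ = 0) :
    ∃ u, g u u = 0 ∧ g ξ u ≠ 0 := by
  have hz : ∃ z, g ξ z ≠ 0 := by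
    by_contra h
    push_neg at h
    exact hξ (hg_nondeg ξ h)
  obtain ⟨z, hz⟩ := hz
  refine ⟨(-(g z z)/(2 * g ξ z)) • ξ + z, ?_, ?_⟩
  · simp only [map_add, map_smul, LinearMap.add_apply, LinearMap.smul_apply, smul_eq_mul]
    rw [hg_symm z ξ, hq]
    field_simp
    ring
  · simp only [map_add, map_smul, LinearMap.smul_apply, smul_eq_mul]
    rw [hq]
    simpa using hz

lemma ratio_lemma {V : Type*} [NormedAddCommGroup V] [NormedSpace ℝ V]
    (g gbar : V →ₗ[ℝ] V →ₗ[ℝ] ℝ)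
    (hg_symm : ∀ x y, g x y = g y x)
    (hg_nondeg : ∀ x, (∀ y, g x y = 0) → x = 0)
    (hgbar_symm : ∀ x y, gbar x y = gbar y x)
    (U : Set V) (hU : IsOpen U)
    (hnull : ∀ ξ ∈ U, ξ ≠ 0 → g ξ ξ = 0 → gbar ξ ξ = 0)
    (ξ₀ : V) (hξU : ξ₀ ∈ U) (hξ0 : ξ₀ ≠ 0) (hq : g ξ₀ ξ₀ = 0) :
    ∃ c₀ : ℝ, (∀ w, gbar ξ₀ w = c₀ * g ξ₀ w) ∧
      (∀ w w', g ξ₀ w = 0 → g ξ₀ w' = 0 → gbar w w' = c₀ * g w w') := by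
  obtain ⟨u, hqu, hβ⟩ := exists_null_u g hg_symm hg_nondeg ξ₀ hξ0 hq
  set c₀ := gbar ξ₀ u / g ξ₀ u with hc₀
  have F1 : ∀ w, gbar ξ₀ w = c₀ * g ξ₀ w := by
    intro w
    have hk := (key_lemma g gbar hg_symm hgbar_symm U hU hnull ξ₀ u w hξU hξ0 hq hqu hβ).1
    rw [hc₀, div_mul_eq_mul_div, eq_div_iff hβ]
    linarith [hk]
  have F2 : ∀ w, g ξ₀ w = 0 → gbar w w = c₀ * g w w := by
    intro w hw
    have hk := (key_lemma g gbar hg_symm hgbar_symm U hU hnull ξ₀ u w hξU hξ0 hq hqu hβ).2 hw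
    rw [hc₀, div_mul_eq_mul_div, eq_div_iff hβ]
    linarith [hk]
  refine ⟨c₀, F1, ?_⟩
  intro w w' hw hw'
  have hsum : g ξ₀ (w + w') = 0 := by rw [map_add, hw, hw', add_zero]
  have e1 := F2 (w + w') hsum
  have e2 := F2 w hw
  have e3 := F2 w' hw'
  simp only [map_add, LinearMap.add_apply] at e1
  rw [hgbar_symm w' w, hg_symm w' w] at e1
  linarith


/-- If ḡ vanishes on all isotropic vectors of g in a nonempty open subset of the
null cone, then ḡ = c·g on the span of those vectors, and globally if they span V. -/
theorem stmt_13 {V : Type*}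
    [NormedAddCommGroup V] [NormedSpace ℝ V] [FiniteDimensional ℝ V]
    (hdim : 3 ≤ Module.finrank ℝ V)
    (g gbar : V →ₗ[ℝ] V →ₗ[ℝ] ℝ)
    (hg_symm : ∀ x y, g x y = g y x)
    (hg_nondeg : ∀ x, (∀ y, g x y = 0) → x = 0)
    (hpos : ∃ x, 0 < g x x) (hneg : ∃ x, g x x < 0)
    (hgbar_symm : ∀ x y, gbar x y = gbar y x)
    (U : Set V) (hU : IsOpen U)
    (hne : (U ∩ {ξ : V | ξ ≠ 0 ∧ g ξ ξ = 0}).Nonempty)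
    (hnull : ∀ ξ ∈ U, ξ ≠ 0 → g ξ ξ = 0 → gbar ξ ξ = 0) :
    ∃ c : ℝ,
      (∀ x ∈ Submodule.span ℝ (U ∩ {ξ : V | ξ ≠ 0 ∧ g ξ ξ = 0}),
        ∀ y ∈ Submodule.span ℝ (U ∩ {ξ : V | ξ ≠ 0 ∧ g ξ ξ = 0}),
          gbar x y = c * g x y) ∧
      (Submodule.span ℝ (U ∩ {ξ : V | ξ ≠ 0 ∧ g ξ ξ = 0}) = ⊤ →
        ∀ x y, gbar x y = c * g x y) := by
  
  obtain ⟨ξs, hξsU, hξs0, hξsq⟩ := hne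
  obtain ⟨c, Fs1, Fs3⟩ := ratio_lemma g gbar hg_symm hg_nondeg hgbar_symm U hU hnull
    ξs hξsU hξs0 hξsq
  have Hmain : ∀ ξ₁ ∈ (U ∩ {ξ : V | ξ ≠ 0 ∧ g ξ ξ = 0}), ∀ w, gbar ξ₁ w = c * g ξ₁ w := by
    rintro ξ₁ ⟨h1U, h10, h1q⟩ w
    by_cases hperp : g ξs ξ₁ = 0
    · by_cases hex : ∃ w', g ξs w' = 0 ∧ g ξ₁ w' ≠ 0
      · obtain ⟨w', hw1, hw2⟩ := hex
        obtain ⟨c₁, G1, _⟩ := ratio_lemma g gbar hg_symm hg_nondeg hgbar_symm U hU hnull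
          ξ₁ h1U h10 h1q
        have e1 := Fs3 ξ₁ w' hperp hw1
        have e2 := G1 w'
        have hcc : c₁ = c := by
          have : c₁ * g ξ₁ w' = c * g ξ₁ w' := by rw [← e2, e1]
          exact mul_right_cancel₀ hw2 this
        rw [G1 w, hcc]
      · push_neg at hex
        have hz : ∃ z, g ξs z ≠ 0 := by
          by_contra h
          push_neg at h
          exact hξs0 (hg_nondeg ξs h)
        obtain ⟨z, hz⟩ := hz
        set lam := g ξ₁ z / g ξs z with hlam
        have hrel : ∀ y, g ξ₁ y = lam * g ξs y := by
          intro y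
          have h0 : g ξs (y - (g ξs y / g ξs z) • z) = 0 := by
            rw [map_sub, map_smul]
            simp only [smul_eq_mul]
            field_simp
            ring
          have h1 := hex _ h0
          rw [map_sub, map_smul] at h1
          simp only [smul_eq_mul] at h1
          have : g ξ₁ y = g ξs y / g ξs z * g ξ₁ z := by linarith
          rw [this, hlam]
          field_simp
        have hξ₁eq : ξ₁ = lam • ξs := by
          have hzero : ∀ y, g (ξ₁ - lam • ξs) y = 0 := by
            intro y
            rw [map_sub, map_smul]
            simp only [LinearMap.sub_apply, LinearMap.smul_apply, smul_eq_mul]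
            rw [hrel y]
            ring
          have := hg_nondeg _ hzero
          rwa [sub_eq_zero] at this
        rw [hξ₁eq]
        rw [map_smul, map_smul]
        simp only [LinearMap.smul_apply, smul_eq_mul]
        rw [Fs1 w]
        ring
    · obtain ⟨c₁, G1, _⟩ := ratio_lemma g gbar hg_symm hg_nondeg hgbar_symm U hU hnull
        ξ₁ h1U h10 h1q
      have e1 := Fs1 ξ₁
      have e2 := G1 ξs
      rw [hgbar_symm ξ₁ ξs] at e2
      rw [hg_symm ξ₁ ξs] at e2
      have hcc : c₁ = c := by
        have : c₁ * g ξs ξ₁ = c * g ξs ξ₁ := by rw [← e2, e1]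
        exact mul_right_cancel₀ hperp this
      rw [G1 w, hcc]
  have Hspan : ∀ x, x ∈ Submodule.span ℝ (U ∩ {ξ : V | ξ ≠ 0 ∧ g ξ ξ = 0}) →
      ∀ y, gbar x y = c * g x y := by
    intro x hx
    induction hx using Submodule.span_induction with
    | mem x hx => exact Hmain x hx
    | zero => intro y; simp
    | add x x' hx hx' ihx ihx' =>
      intro y
      rw [map_add, map_add]
      simp only [LinearMap.add_apply]
      rw [ihx y, ihx' y]
      ring
    | smul a x hx ih =>
      intro y
      rw [map_smul, map_smul]
      simp only [LinearMap.smul_apply, smul_eq_mul]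
      rw [ih y]
      ring
  exact ⟨c, fun x hx y _ => Hspan x hx y,
    fun htop x y => Hspan x (by rw [htop]; exact Submodule.mem_top) y⟩
end

section
/- Let (V,g,J) be a Kähler algebraic setting of dimension 2n ≥ 4 with nondegenerate J-invariant indefinite symmetric bilinear form g. If R is a Kähler algebraic curvature tensor with R(ξ,Jξ,Jξ,ξ) = 0 for every isotropic vector ξ, then R has vanishing Bochner curvature tensor, i.e. R = (1/(2(n+2)))(φ+ψ)(S) − (τ/(4(n+1)(n+2)))(π₁+π₂). -/
/-- π₁(z,u,v,w) = g(z,w)g(u,v) − g(z,v)g(u,w). -/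
def pi1 {V : Type*} (g : V → V → ℝ) (z u v w : V) : ℝ :=
  g z w * g u v - g z v * g u w

/-- Kulkarni–Nomizu type operator φ. -/
def phi {V : Type*} (g Q : V → V → ℝ) (x y z u : V) : ℝ :=
  g x u * Q y z - g x z * Q y u + g y z * Q x u - g y u * Q x z

/-- The operator ψ of the paper. -/
def psi {V : Type*} (J : V → V) (g Q : V → V → ℝ) (x y z u : V) : ℝ :=
  g x (J u) * Q y (J z) - g x (J z) * Q y (J u) - 2 * g x (J y) * Q z (J u)
    + g y (J z) * Q x (J u) - g y (J u) * Q x (J z) - 2 * g z (J u) * Q x (J y)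

/-- π₂(x,y,z,u) = g(x,Ju)g(y,Jz) − g(x,Jz)g(y,Ju) − 2g(x,Jy)g(z,Ju). -/
def pi2 {V : Type*} (J : V → V) (g : V → V → ℝ) (x y z u : V) : ℝ :=
  g x (J u) * g y (J z) - g x (J z) * g y (J u) - 2 * g x (J y) * g z (J u)

def PolyLike (f : ℝ → ℝ) : Prop := ∃ p : Polynomial ℝ, ∀ s, f s = p.eval s

namespace PolyLike

lemma const (c : ℝ) : PolyLike (fun _ => c) := ⟨Polynomial.C c, by simp⟩

lemma add {f h : ℝ → ℝ} (hf : PolyLike f) (hh : PolyLike h) :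
    PolyLike (fun s => f s + h s) := by
  obtain ⟨p, hp⟩ := hf; obtain ⟨q, hq⟩ := hh
  exact ⟨p + q, fun s => by simp [hp, hq]⟩

lemma sub {f h : ℝ → ℝ} (hf : PolyLike f) (hh : PolyLike h) :
    PolyLike (fun s => f s - h s) := by
  obtain ⟨p, hp⟩ := hf; obtain ⟨q, hq⟩ := hh
  exact ⟨p - q, fun s => by simp [hp, hq]⟩

lemma mul {f h : ℝ → ℝ} (hf : PolyLike f) (hh : PolyLike h) :
    PolyLike (fun s => f s * h s) := by
  obtain ⟨p, hp⟩ := hf; obtain ⟨q, hq⟩ := hh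
  exact ⟨p * q, fun s => by simp [hp, hq]⟩

lemma smul {f : ℝ → ℝ} (c : ℝ) (hf : PolyLike f) :
    PolyLike (fun s => c * f s) := (const c).mul hf

lemma zero_of_small {f : ℝ → ℝ} (hf : PolyLike f) {δ : ℝ} (hδ : 0 < δ)
    (h : ∀ s, |s| < δ → f s = 0) : ∀ s, f s = 0 := by
  obtain ⟨p, hp⟩ := hf
  have hroots : {x : ℝ | p.IsRoot x}.Infinite := by
    apply Set.Infinite.mono (s := Set.Ioo (-δ) δ)
    · intro s hs
      simp only [Set.mem_Ioo] at hs
      have : |s| < δ := abs_lt.2 ⟨hs.1, hs.2⟩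
      simpa [Polynomial.IsRoot, ← hp s] using h s this
    · exact Set.Ioo_infinite (by linarith)
  have : p = 0 := Polynomial.eq_zero_of_infinite_isRoot p hroots
  intro s; simp [hp s, this]

end PolyLike

section ML
variable {V : Type*} [AddCommGroup V] [Module ℝ V]

lemma polyLike_ml4 (R : V →ₗ[ℝ] V →ₗ[ℝ] V →ₗ[ℝ] V →ₗ[ℝ] ℝ)
    (x1 u1 x2 u2 x3 u3 x4 u4 : V) :
    PolyLike (fun s => R (x1 + s • u1) (x2 + s • u2) (x3 + s • u3) (x4 + s • u4)) := by
  refine ⟨Polynomial.C (R x1 x2 x3 x4)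
    + Polynomial.C (R u1 x2 x3 x4 + R x1 u2 x3 x4 + R x1 x2 u3 x4 + R x1 x2 x3 u4) * Polynomial.X
    + Polynomial.C (R u1 u2 x3 x4 + R u1 x2 u3 x4 + R u1 x2 x3 u4 + R x1 u2 u3 x4
        + R x1 u2 x3 u4 + R x1 x2 u3 u4) * Polynomial.X ^ 2
    + Polynomial.C (R u1 u2 u3 x4 + R u1 u2 x3 u4 + R u1 x2 u3 u4 + R x1 u2 u3 u4)
        * Polynomial.X ^ 3
    + Polynomial.C (R u1 u2 u3 u4) * Polynomial.X ^ 4, fun s => ?_⟩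
  simp only [map_add, map_smul, LinearMap.add_apply, LinearMap.smul_apply, smul_eq_mul,
    Polynomial.eval_add, Polynomial.eval_mul, Polynomial.eval_pow, Polynomial.eval_C,
    Polynomial.eval_X]
  ring

lemma polyLike_bil (g : V →ₗ[ℝ] V →ₗ[ℝ] ℝ) (x u y w : V) :
    PolyLike (fun s => g (x + s • u) (y + s • w)) := by
  refine ⟨Polynomial.C (g x y) + Polynomial.C (g u y + g x w) * Polynomial.X
    + Polynomial.C (g u w) * Polynomial.X ^ 2, fun s => ?_⟩
  simp only [map_add, map_smul, LinearMap.add_apply, LinearMap.smul_apply, smul_eq_mul,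
    Polynomial.eval_add, Polynomial.eval_mul, Polynomial.eval_pow, Polynomial.eval_C,
    Polynomial.eval_X]
  ring

end ML

section Defs
variable {V : Type*} [AddCommGroup V] [Module ℝ V]
variable (g : V →ₗ[ℝ] V →ₗ[ℝ] ℝ) (J : V →ₗ[ℝ] V)
variable (R : V →ₗ[ℝ] V →ₗ[ℝ] V →ₗ[ℝ] V →ₗ[ℝ] ℝ)

def Ffun (x : V) : ℝ := R x (J x) (J x) x

def c1f (a v : V) : ℝ :=
  R a (J v) (J v) v + R v (J a) (J v) v + R v (J v) (J a) v + R v (J v) (J v) a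

def c2f (a v : V) : ℝ :=
  R a (J a) (J v) v + R a (J v) (J a) v + R a (J v) (J v) a
  + R v (J a) (J a) v + R v (J a) (J v) a + R v (J v) (J a) a

def c2b (a v w : V) : ℝ :=
  R a (J a) (J v) w + R a (J a) (J w) v + R a (J v) (J a) w + R a (J w) (J a) v
  + R a (J v) (J w) a + R a (J w) (J v) a + R v (J a) (J a) w + R w (J a) (J a) v
  + R v (J a) (J w) a + R w (J a) (J v) a + R v (J w) (J a) a + R w (J v) (J a) a

def c3f (a v : V) : ℝ :=
  R v (J a) (J a) a + R a (J v) (J a) a + R a (J a) (J v) a + R a (J a) (J a) v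

noncomputable def Q0 (a x y : V) : ℝ :=
  Ffun J R a * g a x * g a y
  + (c3f J R a (x - g a x • a) * g a y + c3f J R a (y - g a y • a) * g a x) / 2
  + c2b J R a (x - g a x • a) (y - g a y • a) / 2
  - Ffun J R a * g (x - g a x • a) (y - g a y • a)

noncomputable def Qh (a x y : V) : ℝ := (Q0 g J R a x y + Q0 g J R a (J x) (J y)) / 2

noncomputable def Mdl (Q : V → V → ℝ) (x y z u : V) : ℝ :=
  (1/8) * (phi (fun p q => g p q) Q x y z u
    + psi (fun p => J p) (fun p q => g p q) Q x y z u)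

end Defs

set_option maxHeartbeats 4000000 in
/-- If a Kähler algebraic curvature tensor on an indefinite space satisfies
R(ξ,Jξ,Jξ,ξ) = 0 for every isotropic ξ, then its Bochner tensor vanishes. -/
theorem stmt_16 {V : Type*} [AddCommGroup V] [Module ℝ V] [FiniteDimensional ℝ V]
    {n : ℕ} (hn : Module.finrank ℝ V = 2 * n) (hdim : 2 ≤ n)
    (g : V →ₗ[ℝ] V →ₗ[ℝ] ℝ)
    (hg_symm : ∀ x y, g x y = g y x)
    (hg_nondeg : ∀ x, (∀ y, g x y = 0) → x = 0)
    (hpos : ∃ x, 0 < g x x) (hneg : ∃ x, g x x < 0)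
    (J : V →ₗ[ℝ] V) (hJ : ∀ x, J (J x) = -x)
    (hJg : ∀ x y, g (J x) (J y) = g x y)
    (R : V →ₗ[ℝ] V →ₗ[ℝ] V →ₗ[ℝ] V →ₗ[ℝ] ℝ)
    (hR1 : ∀ x y z u, R x y z u = -R y x z u)
    (hR2 : ∀ x y z u, R x y z u = -R x y u z)
    (hR3 : ∀ x y z u, R x y z u = R z u x y)
    (hBianchi : ∀ x y z u, R x y z u + R y z x u + R z x y u = 0)
    (hRJ : ∀ x y z u, R (J x) (J y) z u = R x y z u)
    (e : Module.Basis (Fin (2 * n)) ℝ V) (ε : Fin (2 * n) → ℝ)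
    (hε : ∀ i, ε i = 1 ∨ ε i = -1)
    (horth : ∀ i j, g (e i) (e j) = if i = j then ε i else 0)
    (S : V → V → ℝ) (hS : ∀ y z, S y z = ∑ i, ε i * R (e i) y z (e i))
    (τ : ℝ) (hτ : τ = ∑ i, ε i * S (e i) (e i))
    (hiso : ∀ ξ : V, ξ ≠ 0 → g ξ ξ = 0 → R ξ (J ξ) (J ξ) ξ = 0) :
    ∀ x y z u : V, R x y z u
      = (1 / (2 * ((n : ℝ) + 2)))
          * (phi (fun a b => g a b) S x y z u + psi (fun a => J a) (fun a b => g a b) S x y z u)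
        - (τ / (4 * ((n : ℝ) + 1) * ((n : ℝ) + 2)))
          * (pi1 (fun a b => g a b) x y z u + pi2 (fun a => J a) (fun a b => g a b) x y z u) := by
  -- Part 1: basic identities
  have gJ1 : ∀ p q : V, g (J p) q = - g p (J q) := by
    intro p q
    have h1 : g (J p) (J (J q)) = g p (J q) := hJg p (J q)
    rw [hJ q, map_neg] at h1
    linarith
  have gJx : ∀ p : V, g p (J p) = 0 := by
    intro p
    have h1 := gJ1 p p
    have h2 := hg_symm (J p) p
    linarith
  have hRJlast : ∀ x y z u, R x y (J z) (J u) = R x y z u := by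
    intro x y z u; rw [hR3, hRJ, ← hR3]
  have FJ : ∀ x, Ffun J R (J x) = Ffun J R x := by
    intro x
    show R (J x) (J (J x)) (J (J x)) (J x) = R x (J x) (J x) x
    rw [hRJlast (J x) (J (J x)) (J x) x, hRJ]
  -- Part 1b: basis lemmas
  have eps_sq : ∀ i, ε i * ε i = 1 := by
    intro i; rcases hε i with h | h <;> rw [h] <;> norm_num
  have hrepr : ∀ (x : V) (j : Fin (2*n)), g x (e j) = e.repr x j * ε j := by
    intro x j
    conv_lhs => rw [← e.sum_repr x]
    rw [map_sum, LinearMap.sum_apply]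
    simp [map_smul, LinearMap.smul_apply, smul_eq_mul, horth, mul_ite, mul_zero]
  have hexpand : ∀ x : V, x = ∑ i, (ε i * g x (e i)) • e i := by
    intro x
    conv_lhs => rw [← e.sum_repr x]
    refine Finset.sum_congr rfl fun i _ => ?_
    rw [hrepr x i, show ε i * (e.repr x i * ε i) = e.repr x i * (ε i * ε i) from by ring,
      eps_sq, mul_one]
  have repro : ∀ (B : V → ℝ), (∀ p q, B (p + q) = B p + B q) →
      (∀ (c : ℝ) (p : V), B (c • p) = c * B p) →
      ∀ w, (∑ i, ε i * g w (e i) * B (e i)) = B w := by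
    intro B hadd hsmul w
    have hL : IsLinearMap ℝ B := ⟨hadd, fun c p => by rw [hsmul]; rfl⟩
    have hLB : ∀ v, B v = hL.mk' B v := fun v => (IsLinearMap.mk'_apply hL v).symm
    conv_rhs => rw [hLB w, hexpand w]
    rw [map_sum]
    refine Finset.sum_congr rfl fun i _ => ?_
    rw [map_smul, smul_eq_mul, ← hLB]
    try ring
  have hsig : ∀ x : V, (∑ i, ε i * g x (e i) * g x (e i)) = g x x := by
    intro x
    exact repro (fun w => g x w) (fun p q => map_add _ p q)
      (fun c p => by simp) x
  have hex1 : ∃ i, ε i = 1 := by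
    by_contra h
    push_neg at h
    have hall : ∀ i, ε i = -1 := fun i => (hε i).resolve_left (h i)
    obtain ⟨x, hx⟩ := hpos
    have hle : g x x ≤ 0 := by
      rw [← hsig x]
      apply Finset.sum_nonpos
      intro i _
      rw [hall i]
      nlinarith [sq_nonneg (g x (e i))]
    linarith
  have hex2 : ∃ j, ε j = -1 := by
    by_contra h
    push_neg at h
    have hall : ∀ i, ε i = 1 := fun i => (hε i).resolve_right (h i)
    obtain ⟨x, hx⟩ := hneg
    have hle : 0 ≤ g x x := by
      rw [← hsig x]
      apply Finset.sum_nonneg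
      intro i _
      rw [hall i]
      nlinarith [sq_nonneg (g x (e i))]
    linarith
  obtain ⟨i₀, hi₀⟩ := hex1
  obtain ⟨j₀, hj₀⟩ := hex2
  have hij : i₀ ≠ j₀ := by
    intro h; rw [h, hj₀] at hi₀; norm_num at hi₀
  set a := e i₀ with ha_def
  set b := e j₀ with hb_def
  have haa : g a a = 1 := by rw [ha_def, horth, if_pos rfl, hi₀]
  have hbb : g b b = -1 := by rw [hb_def, horth, if_pos rfl, hj₀]
  have hab : g a b = 0 := by rw [ha_def, hb_def, horth, if_neg hij]
  -- Part 2: quartic expansion and null-cone consequences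
  have hFexp : ∀ (t : ℝ) (v : V), Ffun J R (t • a + v)
      = Ffun J R v + t * c1f J R a v + t^2 * c2f J R a v + t^3 * c3f J R a v
        + t^4 * Ffun J R a := by
    intro t v
    simp only [Ffun, c1f, c2f, c3f, map_add, map_smul, LinearMap.add_apply,
      LinearMap.smul_apply, smul_eq_mul]
    ring
  have hc2bd : ∀ v, c2b J R a v v = 2 * c2f J R a v := by
    intro v; simp only [c2b, c2f]; ring
  have hEO : ∀ v : V, g a v = 0 → g v v < 0 →
      (Ffun J R v - c2f J R a v * g v v + Ffun J R a * (g v v)^2 = 0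
       ∧ c1f J R a v - c3f J R a v * g v v = 0) := by
    intro v hav hvv
    set s := Real.sqrt (-(g v v)) with hs_def
    have hs2 : s^2 = -(g v v) := Real.sq_sqrt (by linarith)
    have hspos : 0 < s := Real.sqrt_pos.2 (by linarith)
    have hva : g v a = 0 := by rw [hg_symm]; exact hav
    have hnull : ∀ t : ℝ, t^2 = -(g v v) → g (t • a + v) (t • a + v) = 0 := by
      intro t ht
      simp only [map_add, map_smul, LinearMap.add_apply, LinearMap.smul_apply,
        smul_eq_mul, haa, hav, hva]
      nlinarith [ht]
    have hnz : ∀ t : ℝ, t ≠ 0 → t • a + v ≠ 0 := by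
      intro t ht h0
      have hgat : g a (t • a + v) = t := by
        simp [map_add, map_smul, haa, hav, smul_eq_mul]
      rw [h0] at hgat
      simp at hgat
      exact ht hgat.symm
    have e1 : Ffun J R (s • a + v) = 0 := hiso _ (hnz s (ne_of_gt hspos)) (hnull s hs2)
    have e2 : Ffun J R ((-s) • a + v) = 0 := by
      refine hiso _ (hnz (-s) (by simp [ne_of_gt hspos])) (hnull (-s) (by rw [← hs2]; ring))
    rw [hFexp] at e1 e2
    have heven : Ffun J R v + s^2 * c2f J R a v + s^4 * Ffun J R a = 0 := by
      linear_combination (e1 + e2) / 2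
    have hodd2 : s * (c1f J R a v + s^2 * c3f J R a v) = 0 := by
      linear_combination (e1 - e2) / 2
    have hodd : c1f J R a v + s^2 * c3f J R a v = 0 := by
      rcases mul_eq_zero.1 hodd2 with h | h
      · exact absurd h (ne_of_gt hspos)
      · exact h
    constructor
    · linear_combination heven + (- c2f J R a v + Ffun J R a * (g v v - s^2)) * hs2
    · linear_combination hodd - c3f J R a v * hs2
  -- Part 2b: polynomial extension to the whole hyperplane
  have hsmall : ∀ u : V, ∃ δ : ℝ, 0 < δ ∧ ∀ s : ℝ, |s| < δ →
      g (b + s • u) (b + s • u) < 0 := by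
    intro u
    set K := 2 * |g b u| + |g u u| with hK_def
    have hK0 : 0 ≤ K := by positivity
    refine ⟨1 / (1 + K), by positivity, fun s hs => ?_⟩
    have habs : |s| ≤ 1 := by
      have : 1 / (1 + K) ≤ 1 := by
        rw [div_le_one (by positivity)]; linarith
      linarith [hs]
    have hexp : g (b + s • u) (b + s • u) = -1 + s * g b u + s * g u b + s^2 * g u u := by
      simp only [map_add, map_smul, LinearMap.add_apply, LinearMap.smul_apply,
        smul_eq_mul, hbb]
      ring
    have hub : g u b = g b u := hg_symm u b
    have h1 : s * g b u ≤ |s| * |g b u| := by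
      calc s * g b u ≤ |s * g b u| := le_abs_self _
        _ = |s| * |g b u| := abs_mul _ _
    have h2 : s^2 * g u u ≤ |s| * |g u u| := by
      have e1 : s^2 * g u u ≤ |s^2| * |g u u| := by
        calc s^2 * g u u ≤ |s^2 * g u u| := le_abs_self _
          _ = |s^2| * |g u u| := abs_mul _ _
      have e2 : |s^2| = |s| * |s| := by rw [sq, abs_mul]
      have e3 : |s| * |s| * |g u u| ≤ |s| * |g u u| := by
        nlinarith [mul_nonneg (mul_nonneg (abs_nonneg s) (abs_nonneg (g u u)))
          (sub_nonneg.2 habs)]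
      rw [e2] at e1
      linarith
    have hKs : |s| * K < 1 := by
      have h3 : |s| * (1 + K) < 1 := by
        have := mul_lt_mul_of_pos_right hs (by positivity : (0:ℝ) < 1 + K)
        calc |s| * (1 + K) < 1 / (1 + K) * (1 + K) := by
              apply mul_lt_mul_of_pos_right hs (by positivity)
          _ = 1 := by field_simp
      nlinarith [abs_nonneg s]
    rw [hexp, hub]
    have : 2 * (s * g b u) + s^2 * g u u ≤ |s| * K := by
      rw [hK_def]
      nlinarith [h1, h2]
    linarith
  have hmemhyp : ∀ (w : V) (s : ℝ), g a w = 0 → g a (b + s • (w - b)) = 0 := by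
    intro w s hw
    simp [map_add, map_smul, map_sub, hab, hw, smul_eq_mul]
  have hplF : ∀ u0 v0 : V, PolyLike (fun s => Ffun J R (u0 + s • v0)) := by
    intro u0 v0
    have heq : (fun s => Ffun J R (u0 + s • v0))
        = fun s : ℝ => R (u0 + s • v0) (J u0 + s • J v0) (J u0 + s • J v0) (u0 + s • v0) := by
      funext s
      simp [Ffun, map_add, map_smul]
    rw [heq]
    exact polyLike_ml4 R u0 v0 (J u0) (J v0) (J u0) (J v0) u0 v0
  have hplc2 : ∀ u0 v0 : V, PolyLike (fun s => c2f J R a (u0 + s • v0)) := by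
    intro u0 v0
    have heq : (fun s => c2f J R a (u0 + s • v0))
        = fun s : ℝ =>
          (R (a + s • (0:V)) (J a + s • (0:V)) (J u0 + s • J v0) (u0 + s • v0)
          + R (a + s • (0:V)) (J u0 + s • J v0) (J a + s • (0:V)) (u0 + s • v0))
          + (R (a + s • (0:V)) (J u0 + s • J v0) (J u0 + s • J v0) (a + s • (0:V))
          + R (u0 + s • v0) (J a + s • (0:V)) (J a + s • (0:V)) (u0 + s • v0))
          + (R (u0 + s • v0) (J a + s • (0:V)) (J u0 + s • J v0) (a + s • (0:V))
          + R (u0 + s • v0) (J u0 + s • J v0) (J a + s • (0:V)) (a + s • (0:V))) := by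
      funext s
      simp [c2f, map_add, map_smul]
      ring
    rw [heq]
    exact (((polyLike_ml4 R _ _ _ _ _ _ _ _).add (polyLike_ml4 R _ _ _ _ _ _ _ _)).add
      ((polyLike_ml4 R _ _ _ _ _ _ _ _).add (polyLike_ml4 R _ _ _ _ _ _ _ _))).add
      ((polyLike_ml4 R _ _ _ _ _ _ _ _).add (polyLike_ml4 R _ _ _ _ _ _ _ _))
  have hplc1 : ∀ u0 v0 : V, PolyLike (fun s => c1f J R a (u0 + s • v0)) := by
    intro u0 v0
    have heq : (fun s => c1f J R a (u0 + s • v0))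
        = fun s : ℝ =>
          (R (a + s • (0:V)) (J u0 + s • J v0) (J u0 + s • J v0) (u0 + s • v0)
          + R (u0 + s • v0) (J a + s • (0:V)) (J u0 + s • J v0) (u0 + s • v0))
          + (R (u0 + s • v0) (J u0 + s • J v0) (J a + s • (0:V)) (u0 + s • v0)
          + R (u0 + s • v0) (J u0 + s • J v0) (J u0 + s • J v0) (a + s • (0:V))) := by
      funext s
      simp [c1f, map_add, map_smul]
      ring
    rw [heq]
    exact ((polyLike_ml4 R _ _ _ _ _ _ _ _).add (polyLike_ml4 R _ _ _ _ _ _ _ _)).add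
      ((polyLike_ml4 R _ _ _ _ _ _ _ _).add (polyLike_ml4 R _ _ _ _ _ _ _ _))
  have hplc3 : ∀ u0 v0 : V, PolyLike (fun s => c3f J R a (u0 + s • v0)) := by
    intro u0 v0
    have heq : (fun s => c3f J R a (u0 + s • v0))
        = fun s : ℝ =>
          (R (u0 + s • v0) (J a + s • (0:V)) (J a + s • (0:V)) (a + s • (0:V))
          + R (a + s • (0:V)) (J u0 + s • J v0) (J a + s • (0:V)) (a + s • (0:V)))
          + (R (a + s • (0:V)) (J a + s • (0:V)) (J u0 + s • J v0) (a + s • (0:V))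
          + R (a + s • (0:V)) (J a + s • (0:V)) (J a + s • (0:V)) (u0 + s • v0)) := by
      funext s
      simp [c3f, map_add, map_smul]
      ring
    rw [heq]
    exact ((polyLike_ml4 R _ _ _ _ _ _ _ _).add (polyLike_ml4 R _ _ _ _ _ _ _ _)).add
      ((polyLike_ml4 R _ _ _ _ _ _ _ _).add (polyLike_ml4 R _ _ _ _ _ _ _ _))
  have hplg : ∀ u0 v0 : V, PolyLike (fun s => g (u0 + s • v0) (u0 + s • v0)) :=
    fun u0 v0 => polyLike_bil g u0 v0 u0 v0
  have hPol : ∀ w : V, g a w = 0 →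
      Ffun J R w - c2f J R a w * g w w + Ffun J R a * (g w w)^2 = 0 := by
    intro w hw
    obtain ⟨δ, hδ, hneg'⟩ := hsmall (w - b)
    have hvan : ∀ s : ℝ, |s| < δ →
        (fun s => Ffun J R (b + s • (w - b)) - c2f J R a (b + s • (w - b)) *
          g (b + s • (w - b)) (b + s • (w - b))
          + Ffun J R a * (g (b + s • (w - b)) (b + s • (w - b)))^2) s = 0 := by
      intro s hs
      exact (hEO _ (hmemhyp w s hw) (hneg' s hs)).1
    have hpl : PolyLike (fun s => Ffun J R (b + s • (w - b)) - c2f J R a (b + s • (w - b)) *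
        g (b + s • (w - b)) (b + s • (w - b))
        + Ffun J R a * (g (b + s • (w - b)) (b + s • (w - b)))^2) := by
      have h2 : PolyLike (fun s => (g (b + s • (w - b)) (b + s • (w - b)))^2) := by
        have := (hplg b (w - b)).mul (hplg b (w - b))
        simpa [sq] using this
      exact ((hplF b (w-b)).sub ((hplc2 b (w-b)).mul (hplg b (w-b)))).add
        ((PolyLike.const (Ffun J R a)).mul h2)
    have := hpl.zero_of_small hδ hvan 1
    simpa using this
  have hOdd : ∀ w : V, g a w = 0 →
      c1f J R a w - c3f J R a w * g w w = 0 := by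
    intro w hw
    obtain ⟨δ, hδ, hneg'⟩ := hsmall (w - b)
    have hvan : ∀ s : ℝ, |s| < δ →
        (fun s => c1f J R a (b + s • (w - b)) - c3f J R a (b + s • (w - b)) *
          g (b + s • (w - b)) (b + s • (w - b))) s = 0 := by
      intro s hs
      exact (hEO _ (hmemhyp w s hw) (hneg' s hs)).2
    have hpl : PolyLike (fun s => c1f J R a (b + s • (w - b)) - c3f J R a (b + s • (w - b)) *
        g (b + s • (w - b)) (b + s • (w - b))) :=
      (hplc1 b (w-b)).sub ((hplc3 b (w-b)).mul (hplg b (w-b)))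
    have := hpl.zero_of_small hδ hvan 1
    simpa using this
  -- Part 3: the quadratic form Q
  have hFQ0 : ∀ x : V, Ffun J R x = g x x * Q0 g J R a x x := by
    intro x
    have hav : g a (x - g a x • a) = 0 := by
      simp [map_sub, map_smul, haa, smul_eq_mul]
    have hva : g (x - g a x • a) a = 0 := by rw [hg_symm]; exact hav
    have hxa : (g a x) • a + (x - g a x • a) = x := by abel
    have hgxx : g x x = (g a x)^2 + g (x - g a x • a) (x - g a x • a) := by
      conv_lhs => rw [← hxa]
      simp only [map_add, map_smul, LinearMap.add_apply, LinearMap.smul_apply,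
        smul_eq_mul, haa, hav, hva]
      ring
    have hP := hPol _ hav
    have hO := hOdd _ hav
    have hFx : Ffun J R x = Ffun J R (x - g a x • a)
        + (g a x) * c1f J R a (x - g a x • a)
        + (g a x)^2 * c2f J R a (x - g a x • a)
        + (g a x)^3 * c3f J R a (x - g a x • a)
        + (g a x)^4 * Ffun J R a := by
      conv_lhs => rw [← hxa]
      exact hFexp (g a x) _
    rw [hFx, hgxx]
    simp only [Q0]
    rw [hc2bd]
    linear_combination hP + (g a x) * hO
  have hc2bsymm : ∀ v w, c2b J R a v w = c2b J R a w v := by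
    intro v w; simp only [c2b]; ring
  have hQ0symm : ∀ x y, Q0 g J R a x y = Q0 g J R a y x := by
    intro x y
    simp only [Q0]
    linear_combination (- Ffun J R a) * hg_symm (x - g a x • a) (y - g a y • a)
      + (1/2 : ℝ) * hc2bsymm (x - g a x • a) (y - g a y • a)
  have hc3neg : ∀ v, c3f J R a (-v) = - c3f J R a v := by
    intro v
    have hRn : ∀ v a b c : V, R (-v) a b c = - R v a b c := by
      intro v a b c
      rw [← neg_one_smul ℝ v, map_smul]; simp only [LinearMap.smul_apply, smul_eq_mul]; ring
    simp [c3f, map_neg, LinearMap.neg_apply, hRn]; ring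
  have hc2bneg : ∀ v w, c2b J R a (-v) (-w) = c2b J R a v w := by
    intro v w
    have hRn : ∀ v a b c : V, R (-v) a b c = - R v a b c := by
      intro v a b c
      rw [← neg_one_smul ℝ v, map_smul]; simp only [LinearMap.smul_apply, smul_eq_mul]; ring
    simp [c2b, map_neg, LinearMap.neg_apply, hRn]
  have hQ0neg : ∀ x y, Q0 g J R a (-x) (-y) = Q0 g J R a x y := by
    intro x y
    have hvx : -x - g a (-x) • a = -(x - g a x • a) := by
      rw [map_neg, neg_smul]; abel
    have hvy : -y - g a (-y) • a = -(y - g a y • a) := by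
      rw [map_neg, neg_smul]; abel
    simp only [Q0]
    rw [hvx, hvy]
    simp only [map_neg, hc3neg, hc2bneg, LinearMap.neg_apply]
    ring
  have hQhsymm : ∀ x y, Qh g J R a x y = Qh g J R a y x := by
    intro x y
    simp only [Qh]
    rw [hQ0symm x y, hQ0symm (J x) (J y)]
  have hQhJJ : ∀ x y, Qh g J R a (J x) (J y) = Qh g J R a x y := by
    intro x y
    simp only [Qh, hJ]
    rw [hQ0neg]
    ring
  have hFQ : ∀ x, Ffun J R x = g x x * Qh g J R a x x := by
    intro x
    have h1 := hFQ0 x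
    have h2 := hFQ0 (J x)
    rw [FJ x, hJg x x] at h2
    simp only [Qh]
    linear_combination (h1 + h2) / 2
  -- linearity of Qh
  have hc3add : ∀ v w, c3f J R a (v + w) = c3f J R a v + c3f J R a w := by
    intro v w; simp [c3f, map_add]; ring
  have hc3smul : ∀ (c : ℝ) v, c3f J R a (c • v) = c * c3f J R a v := by
    intro c v; simp [c3f, map_smul, smul_eq_mul]; ring
  have hc2badd1 : ∀ v v' w, c2b J R a (v + v') w = c2b J R a v w + c2b J R a v' w := by
    intro v v' w; simp [c2b, map_add]; ring
  have hc2bsmul1 : ∀ (c : ℝ) v w, c2b J R a (c • v) w = c * c2b J R a v w := by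
    intro c v w; simp [c2b, map_smul, smul_eq_mul]; ring
  have hQ0add1 : ∀ x x' y, Q0 g J R a (x + x') y = Q0 g J R a x y + Q0 g J R a x' y := by
    intro x x' y
    have hv : (x + x') - g a (x + x') • a = (x - g a x • a) + (x' - g a x' • a) := by
      rw [map_add, add_smul]; abel
    simp only [Q0]
    rw [hv]
    simp only [map_add, hc3add, hc2badd1, LinearMap.add_apply]
    ring
  have hQ0smul1 : ∀ (c : ℝ) x y, Q0 g J R a (c • x) y = c * Q0 g J R a x y := by
    intro c x y
    have hv : (c • x) - g a (c • x) • a = c • (x - g a x • a) := by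
      rw [map_smul, smul_eq_mul, mul_smul, smul_sub]
    simp only [Q0]
    rw [hv]
    simp only [map_smul, hc3smul, hc2bsmul1, LinearMap.smul_apply, smul_eq_mul]
    ring
  have hQhadd1 : ∀ x x' y, Qh g J R a (x + x') y = Qh g J R a x y + Qh g J R a x' y := by
    intro x x' y
    simp only [Qh, map_add, hQ0add1]
    ring
  have hQhsmul1 : ∀ (c : ℝ) x y, Qh g J R a (c • x) y = c * Qh g J R a x y := by
    intro c x y
    simp only [Qh, map_smul, hQ0smul1]
    ring
  have hQhadd2 : ∀ x y y', Qh g J R a x (y + y') = Qh g J R a x y + Qh g J R a x y' := by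
    intro x y y'
    rw [hQhsymm, hQhadd1, hQhsymm y x, hQhsymm y' x]
  have hQhsmul2 : ∀ (c : ℝ) x y, Qh g J R a x (c • y) = c * Qh g J R a x y := by
    intro c x y
    rw [hQhsymm, hQhsmul1, hQhsymm y x]
  have hQhneg2 : ∀ x y, Qh g J R a x (-y) = - Qh g J R a x y := by
    intro x y
    rw [show -y = ((-1 : ℝ) • y) from by simp, hQhsmul2]
    ring
  have hQhJ1 : ∀ x y, Qh g J R a (J x) y = - Qh g J R a x (J y) := by
    intro x y
    have h1 : Qh g J R a (J x) (J (J y)) = Qh g J R a x (J y) := hQhJJ x (J y)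
    rw [hJ y, hQhneg2] at h1
    linarith
  have hQhxJx : ∀ x, Qh g J R a x (J x) = 0 := by
    intro x
    have h1 := hQhJ1 x x
    have h2 : Qh g J R a (J x) x = Qh g J R a x (J x) := hQhsymm (J x) x
    linarith
  -- Part 4: model tensor lemmas
  have hgsk : ∀ p q : V, g p (J q) = - g q (J p) := by
    intro p q
    have h1 := gJ1 q p
    have h2 := hg_symm p (J q)
    linarith [hg_symm (J q) p]
  have hQsk : ∀ p q : V, Qh g J R a p (J q) = - Qh g J R a q (J p) := by
    intro p q
    have h1 := hQhJ1 q p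
    have h2 := hQhsymm (J q) p
    linarith
  have gJx2 : ∀ p : V, g (J p) p = 0 := by
    intro p; rw [hg_symm]; exact gJx p
  have hQxJx2 : ∀ p : V, Qh g J R a (J p) p = 0 := by
    intro p; rw [hQhsymm]; exact hQhxJx p
  have hMHSC : ∀ x, Mdl g J (Qh g J R a) x (J x) (J x) x = g x x * Qh g J R a x x := by
    intro x
    simp only [Mdl, phi, psi]
    simp only [hJ, map_neg, LinearMap.neg_apply, hQhneg2, gJx, gJx2, hQhxJx, hQxJx2,
      hJg, hQhJJ, neg_neg]
    ring
  have hM1 : ∀ x y z u, Mdl g J (Qh g J R a) y x z u = - Mdl g J (Qh g J R a) x y z u := by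
    intro x y z u
    simp only [Mdl, phi, psi]
    linear_combination (-(1/4 : ℝ) * Qh g J R a z (J u)) * hgsk x y
      + (-(1/4 : ℝ) * g z (J u)) * hQsk x y
  have hM2 : ∀ x y z u, Mdl g J (Qh g J R a) x y u z = - Mdl g J (Qh g J R a) x y z u := by
    intro x y z u
    simp only [Mdl, phi, psi]
    linear_combination (-(1/4 : ℝ) * g x (J y)) * hQsk z u
      + (-(1/4 : ℝ) * Qh g J R a x (J y)) * hgsk z u
  have hM3 : ∀ x y z u, Mdl g J (Qh g J R a) z u x y = Mdl g J (Qh g J R a) x y z u := by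
    intro x y z u
    simp only [Mdl, phi, psi]
    simp only [hgsk z y, hgsk z x, hgsk u y, hgsk u x, hQsk z y, hQsk z x, hQsk u y,
      hQsk u x, hg_symm z y, hg_symm z x, hg_symm u y, hg_symm u x, hQhsymm z y,
      hQhsymm z x, hQhsymm u y, hQhsymm u x]
    ring
  have hMB : ∀ x y z u, Mdl g J (Qh g J R a) x y z u + Mdl g J (Qh g J R a) y z x u
      + Mdl g J (Qh g J R a) z x y u = 0 := by
    intro x y z u
    simp only [Mdl, phi, psi]
    simp only [hgsk y x, hgsk z x, hgsk z y, hgsk u x, hgsk u y, hgsk u z,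
      hQsk y x, hQsk z x, hQsk z y, hQsk u x, hQsk u y, hQsk u z,
      hg_symm y x, hg_symm z x, hg_symm z y, hg_symm u x, hg_symm u y, hg_symm u z,
      hQhsymm y x, hQhsymm z x, hQhsymm z y, hQhsymm u x, hQhsymm u y, hQhsymm u z]
    ring
  have hMJ : ∀ x y z u, Mdl g J (Qh g J R a) (J x) (J y) z u = Mdl g J (Qh g J R a) x y z u := by
    intro x y z u
    simp only [Mdl, phi, psi]
    simp only [hJ, map_neg, LinearMap.neg_apply, gJ1, hQhJ1, hQhneg2, neg_neg]
    ring
  -- Part 5: uniqueness — the Bochner-type difference tensor vanishes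
  set DD : V → V → V → V → ℝ :=
    fun x y z u => R x y z u - Mdl g J (Qh g J R a) x y z u with hDDdef
  have hDadd1 : ∀ x x' y z u, DD (x + x') y z u = DD x y z u + DD x' y z u := by
    intro x x' y z u
    simp only [hDDdef, Mdl, phi, psi, map_add, LinearMap.add_apply, hQhadd1, hQhadd2]
    ring
  have hDadd2 : ∀ x y y' z u, DD x (y + y') z u = DD x y z u + DD x y' z u := by
    intro x y y' z u
    simp only [hDDdef, Mdl, phi, psi, map_add, LinearMap.add_apply, hQhadd1, hQhadd2]
    ring
  have hDadd3 : ∀ x y z z' u, DD x y (z + z') u = DD x y z u + DD x y z' u := by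
    intro x y z z' u
    simp only [hDDdef, Mdl, phi, psi, map_add, LinearMap.add_apply, hQhadd1, hQhadd2]
    ring
  have hDadd4 : ∀ x y z u u', DD x y z (u + u') = DD x y z u + DD x y z u' := by
    intro x y z u u'
    simp only [hDDdef, Mdl, phi, psi, map_add, LinearMap.add_apply, hQhadd1, hQhadd2]
    ring
  have hDsmul1 : ∀ (c : ℝ) x y z u, DD (c • x) y z u = c * DD x y z u := by
    intro c x y z u
    simp only [hDDdef, Mdl, phi, psi, map_smul, LinearMap.smul_apply, smul_eq_mul,
      hQhsmul1, hQhsmul2]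
    ring
  have hDsmul2 : ∀ (c : ℝ) x y z u, DD x (c • y) z u = c * DD x y z u := by
    intro c x y z u
    simp only [hDDdef, Mdl, phi, psi, map_smul, LinearMap.smul_apply, smul_eq_mul,
      hQhsmul1, hQhsmul2]
    ring
  have hDsmul3 : ∀ (c : ℝ) x y z u, DD x y (c • z) u = c * DD x y z u := by
    intro c x y z u
    simp only [hDDdef, Mdl, phi, psi, map_smul, LinearMap.smul_apply, smul_eq_mul,
      hQhsmul1, hQhsmul2]
    ring
  have hDsmul4 : ∀ (c : ℝ) x y z u, DD x y z (c • u) = c * DD x y z u := by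
    intro c x y z u
    simp only [hDDdef, Mdl, phi, psi, map_smul, LinearMap.smul_apply, smul_eq_mul,
      hQhsmul1, hQhsmul2]
    ring
  have hD1 : ∀ x y z u, DD y x z u = - DD x y z u := by
    intro x y z u
    simp only [hDDdef]
    linear_combination hR1 y x z u - hM1 x y z u
  have hD2 : ∀ x y z u, DD x y u z = - DD x y z u := by
    intro x y z u
    simp only [hDDdef]
    linear_combination hR2 x y z u - hM2 x y z u
  have hD3 : ∀ x y z u, DD x y z u = DD z u x y := by
    intro x y z u
    simp only [hDDdef]
    linear_combination (- hR3 z u x y) + hM3 x y z u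
  have hDB : ∀ x y z u, DD x y z u + DD y z x u + DD z x y u = 0 := by
    intro x y z u
    simp only [hDDdef]
    linear_combination hBianchi x y z u - hMB x y z u
  have hDJ : ∀ x y z u, DD (J x) (J y) z u = DD x y z u := by
    intro x y z u
    simp only [hDDdef]
    linear_combination hRJ x y z u - hMJ x y z u
  have hDneg2 : ∀ x y z u, DD x (-y) z u = - DD x y z u := by
    intro x y z u
    rw [show -y = ((-1 : ℝ) • y) from by simp, hDsmul2]
    ring
  have hDneg3 : ∀ x y z u, DD x y (-z) u = - DD x y z u := by
    intro x y z u
    rw [show -z = ((-1 : ℝ) • z) from by simp, hDsmul3]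
    ring
  have hDJm : ∀ x y z u, DD (J x) y z u = - DD x (J y) z u := by
    intro x y z u
    have h1 : DD (J x) (J (J y)) z u = DD x (J y) z u := hDJ x (J y) z u
    rw [hJ y, hDneg2] at h1
    linarith
  have hDJlast : ∀ x y z u, DD x y (J z) (J u) = DD x y z u := by
    intro x y z u
    rw [hD3, hDJ, ← hD3]
  have hDF0 : ∀ x, DD x (J x) (J x) x = 0 := by
    intro x
    have h1 := hFQ x
    simp only [Ffun] at h1
    simp only [hDDdef]
    rw [hMHSC]
    linarith
  have hDexp : ∀ (t : ℝ) (x y : V),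
      DD (x + t • y) (J (x + t • y)) (J (x + t • y)) (x + t • y)
      = DD x (J x) (J x) x
        + t * (DD y (J x) (J x) x + DD x (J y) (J x) x + DD x (J x) (J y) x
            + DD x (J x) (J x) y)
        + t^2 * (DD y (J y) (J x) x + DD y (J x) (J y) x + DD y (J x) (J x) y
            + DD x (J y) (J y) x + DD x (J y) (J x) y + DD x (J x) (J y) y)
        + t^3 * (DD x (J y) (J y) y + DD y (J x) (J y) y + DD y (J y) (J x) y
            + DD y (J y) (J y) x)
        + t^4 * DD y (J y) (J y) y := by
    intro t x y
    simp only [map_add, map_smul]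
    simp only [hDadd1, hDadd2, hDadd3, hDadd4, hDsmul1, hDsmul2, hDsmul3, hDsmul4]
    ring
  have hI : ∀ x y, DD y (J x) (J x) x = 0 := by
    intro x y
    have hq : ∀ t : ℝ,
        DD x (J x) (J x) x
        + t * (DD y (J x) (J x) x + DD x (J y) (J x) x + DD x (J x) (J y) x
            + DD x (J x) (J x) y)
        + t^2 * (DD y (J y) (J x) x + DD y (J x) (J y) x + DD y (J x) (J x) y
            + DD x (J y) (J y) x + DD x (J y) (J x) y + DD x (J x) (J y) y)
        + t^3 * (DD x (J y) (J y) y + DD y (J x) (J y) y + DD y (J y) (J x) y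
            + DD y (J y) (J y) x)
        + t^4 * DD y (J y) (J y) y = 0 := by
      intro t
      rw [← hDexp t x y]
      exact hDF0 (x + t • y)
    have h0 := hDF0 x
    have h4 := hDF0 y
    have e1 := hq 1
    have e2 := hq (-1)
    have e3 := hq 2
    norm_num at e1 e2 e3
    have hC1 : DD y (J x) (J x) x + DD x (J y) (J x) x + DD x (J x) (J y) x
        + DD x (J x) (J x) y = 0 := by linarith
    -- the four terms are equal
    have t2 : DD x (J y) (J x) x = DD y (J x) (J x) x := by
      have h1 := hDJm x y (J x) x
      have h2 := hD1 y (J x) (J x) x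
      linarith
    have t3 : DD x (J x) (J y) x = DD y (J x) (J x) x := by
      have h1 : DD x (J x) (J y) x = DD (J y) x x (J x) := hD3 x (J x) (J y) x
      have h2 := hDJm y x x (J x)
      have h3 := hD2 y (J x) (J x) x
      linarith
    have t4 : DD x (J x) (J x) y = DD x (J x) (J y) x := by
      have h1 : DD x (J x) (J x) y = DD (J x) y x (J x) := hD3 x (J x) (J x) y
      have h2 := hDJm x y x (J x)
      have h3 : DD x (J y) x (J x) = DD x (J x) x (J y) := by
        rw [hD3 x (J y) x (J x)]
      have h4 := hD2 x (J x) (J y) x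
      linarith
    linarith
  have hDexp2 : ∀ (t : ℝ) (x y : V),
      DD y (J (x + t • y)) (J (x + t • y)) (x + t • y)
      = DD y (J x) (J x) x
        + t * (DD y (J y) (J x) x + DD y (J x) (J y) x + DD y (J x) (J x) y)
        + t^2 * (DD y (J y) (J y) x + DD y (J y) (J x) y + DD y (J x) (J y) y)
        + t^3 * DD y (J y) (J y) y := by
    intro t x y
    simp only [map_add, map_smul]
    simp only [hDadd2, hDadd3, hDadd4, hDsmul2, hDsmul3, hDsmul4]
    ring
  have hII : ∀ x y, DD y (J y) (J x) x + DD y (J x) (J y) x + DD y (J x) (J x) y = 0 := by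
    intro x y
    have hq : ∀ t : ℝ,
        DD y (J x) (J x) x
        + t * (DD y (J y) (J x) x + DD y (J x) (J y) x + DD y (J x) (J x) y)
        + t^2 * (DD y (J y) (J y) x + DD y (J y) (J x) y + DD y (J x) (J y) y)
        + t^3 * DD y (J y) (J y) y = 0 := by
      intro t
      rw [← hDexp2 t x y]
      exact hI (x + t • y) y
    have h0 := hI x y
    have h3 := hI y y
    have e1 := hq 1
    have e2 := hq (-1)
    norm_num at e1 e2
    linarith
  -- a' = a chain lemma : DD x (J y) (J y) x = DD y (J x) (J y) x  (i.e. a' = c)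
  have hxJJ : ∀ x : V, J (-(J x)) = x := by
    intro x; rw [map_neg, hJ, neg_neg]
  have hb1 : ∀ x y, DD y (J y) (J x) x + DD y x y x - DD x (J y) (J y) x = 0 := by
    intro x y
    have hB := hDB y (J y) (J x) x
    have h1 : DD (J y) (J x) y x = DD y x y x := hDJ y x y x
    have h2 := hDJm x y (J y) x
    linarith
  have hb2 : ∀ x y, DD y (J x) (J y) x - DD y x y x - DD y (J y) (J x) x = 0 := by
    intro x y
    have hB := hDB y (J x) (J y) x
    have h1 : DD (J x) (J y) y x = DD x y y x := hDJ x y y x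
    have h2 : DD x y y x = - DD y x y x := hD1 y x y x
    have h3 := hDJm y y (J x) x
    linarith
  have haa' : ∀ x y, DD x (J y) (J y) x = DD y (J x) (J x) y := by
    intro x y
    have h1 : DD x (J y) (J y) x = DD (J y) x x (J y) := hD3 x (J y) (J y) x
    have h2 := hDJm y x x (J y)
    -- DD (J y) x x (J y) = - DD y (J x) x (J y)
    have h3 : DD y (J x) x (J y) = - DD y (J x) (J x) y := by
      calc DD y (J x) x (J y) = DD y (J x) (J (-(J x))) (J y) := by rw [hxJJ x]
        _ = DD y (J x) (-(J x)) y := hDJlast y (J x) (-(J x)) y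
        _ = - DD y (J x) (J x) y := hDneg3 y (J x) (J x) y
    linarith
  have h3a : ∀ x y, 3 * DD y (J x) (J x) y = DD y x y x := by
    intro x y
    have h1 := hb1 x y
    have h2 := hb2 x y
    have h3 := hII x y
    have h4 := haa' x y
    linarith
  have hca : ∀ x y, DD y (J x) (J y) x = DD y (J x) (J x) y := by
    intro x y
    have h1 := hb1 x y
    have h2 := hb2 x y
    have h4 := haa' x y
    linarith
  have hd0 : ∀ x y, DD y x y x = 0 := by
    intro x y
    have h1 := h3a x y
    -- substitute y ↦ J y
    have h2 := h3a x (J y)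
    have h3 : DD (J y) (J x) (J x) (J y) = - DD y x y x := by
      have e1 : DD (J y) (J x) (J x) (J y) = DD y x (J x) (J y) := hDJ y x (J x) (J y)
      have e2 : DD y x (J x) (J y) = DD y x x y := hDJlast y x x y
      have e3 : DD y x x y = - DD y x y x := hD2 y x y x
      linarith
    have h5 : DD (J y) x (J y) x = - DD y (J x) (J y) x := by
      have := hDJm y x (J y) x
      linarith
    have h6 := hca x y
    have h7 := h3a x y
    linarith
  -- classical: zero biquadratic form implies zero tensor
  have hsec : ∀ x y, DD x y y x = 0 := by
    intro x y
    have h1 := hd0 y x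
    have h2 := hD2 x y x y
    linarith
  have hs2 : ∀ x y z, DD x y y z = 0 := by
    intro x y z
    have hpol : DD x y y z + DD z y y x = 0 := by
      have h := hsec (x + z) y
      rw [hDadd1] at h
      rw [hDadd4, hDadd4] at h
      have h1 := hsec x y
      have h2 := hsec z y
      linarith
    have hswap : DD z y y x = DD x y y z := by
      have h1 : DD z y y x = DD y x z y := hD3 z y y x
      have h2 := hD1 x y z y
      have h3 := hD2 x y y z
      linarith
    linarith
  have hs3 : ∀ x y u z, DD x y u z + DD x u y z = 0 := by
    intro x y u z
    have h := hs2 x (y + u) z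
    rw [hDadd2] at h
    rw [hDadd3, hDadd3] at h
    have h1 := hs2 x y z
    have h2 := hs2 x u z
    linarith
  have hrot : ∀ p q r t, DD p q r t = DD p t q r := by
    intro p q r t
    have h1 := hs3 p q r t
    have h2 := hD2 p r t q
    have h3 := hs3 p r t q
    have h4 := hD2 p t q r
    linarith
  have hDzero : ∀ x y z u, DD x y z u = 0 := by
    intro x y z u
    have hB := hDB x y z u
    have h1 : DD y z x u = DD x y z u := by
      have e1 : DD y z x u = DD x u y z := hD3 y z x u
      have e2 : DD x u y z = DD x z u y := hrot x u y z
      have e3 : DD x z u y = DD x y z u := hrot x z u y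
      linarith
    have h2 : DD z x y u = DD x y z u := by
      have e1 : DD z x y u = DD y u z x := hD3 z x y u
      have e2 : DD y u z x = DD y x u z := hrot y u z x
      have e3 : DD y x u z = - DD x y u z := hD1 x y u z
      have e4 : DD x y u z = - DD x y z u := hD2 x y z u
      linarith
    linarith
  have hRM : ∀ x y z u, R x y z u = Mdl g J (Qh g J R a) x y z u := by
    intro x y z u
    have h := hDzero x y z u
    simp only [hDDdef] at h
    linarith
  -- Part 6: trace identification and final assembly
  have hgii : ∀ i, g (e i) (e i) = ε i := by
    intro i; rw [horth, if_pos rfl]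
  have hA1 : (∑ i, ε i * ε i) = (2 * (n:ℝ)) := by
    simp only [eps_sq, Finset.sum_const, Finset.card_univ, Fintype.card_fin,
      nsmul_eq_mul, mul_one]
    push_cast
    ring
  have hA2 : ∀ y z, (∑ i, ε i * g z (e i) * Qh g J R a y (e i)) = Qh g J R a y z :=
    fun y z => repro (fun w => Qh g J R a y w) (fun p q => hQhadd2 y p q)
      (fun c p => hQhsmul2 c y p) z
  have hA4 : ∀ y z, (∑ i, ε i * g y (e i) * Qh g J R a (e i) z) = Qh g J R a y z :=
    fun y z => repro (fun w => Qh g J R a w z) (fun p q => hQhadd1 p q z)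
      (fun c p => hQhsmul1 c p z) y
  have hA5 : ∀ y z, (∑ i, ε i * g (J z) (e i) * Qh g J R a y (J (e i)))
      = Qh g J R a y (J (J z)) :=
    fun y z => repro (fun w => Qh g J R a y (J w))
      (fun p q => by simp only [map_add, hQhadd2]) (fun c p => by simp only [map_smul, hQhsmul2]) (J z)
  have hA7 : ∀ y z, (∑ i, ε i * g (J y) (e i) * Qh g J R a (e i) (J z))
      = Qh g J R a (J y) (J z) :=
    fun y z => repro (fun w => Qh g J R a w (J z)) (fun p q => hQhadd1 p q (J z))
      (fun c p => hQhsmul1 c p (J z)) (J y)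
  set t0 : ℝ := ∑ i, ε i * Qh g J R a (e i) (e i) with ht0def
  have hSQ : ∀ y z, S y z
      = (1/8) * ((2*(n:ℝ) + 4) * Qh g J R a y z + t0 * g y z) := by
    intro y z
    rw [hS]
    have hterm : ∀ i, ε i * R (e i) y z (e i)
        = (1/8) * ( (ε i * ε i) * Qh g J R a y z
          - ε i * g z (e i) * Qh g J R a y (e i)
          + (ε i * Qh g J R a (e i) (e i)) * g y z
          - ε i * g y (e i) * Qh g J R a (e i) z
          - ε i * g (J z) (e i) * Qh g J R a y (J (e i))
          - 2 * (ε i * g (J y) (e i) * Qh g J R a z (J (e i)))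
          + ε i * g (J y) (e i) * Qh g J R a (e i) (J z)
          + 2 * (ε i * g (J z) (e i) * Qh g J R a (e i) (J y)) ) := by
      intro i
      rw [hRM]
      simp only [Mdl, phi, psi]
      rw [hgii i, gJx (e i), hQhxJx (e i)]
      rw [hg_symm (e i) z, hg_symm (e i) (J z), hg_symm (e i) (J y)]
      rw [show g y (J (e i)) = - g (J y) (e i) from by have := gJ1 y (e i); linarith]
      rw [show g z (J (e i)) = - g (J z) (e i) from by have := gJ1 z (e i); linarith]
      ring
    rw [Finset.sum_congr rfl (fun i _ => hterm i), ← Finset.mul_sum]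
    simp only [Finset.sum_add_distrib, Finset.sum_sub_distrib, ← Finset.sum_mul,
      ← Finset.mul_sum]
    rw [hA1, hA2 y z, hA4 y z, hA5 y z, hA7 y z]
    rw [show (∑ i, ε i * g (J y) (e i) * Qh g J R a z (J (e i)))
        = Qh g J R a z (J (J y)) from hA5 z y]
    rw [show (∑ i, ε i * g (J z) (e i) * Qh g J R a (e i) (J y))
        = Qh g J R a (J z) (J y) from hA7 z y]
    rw [hJ z, hJ y, hQhneg2, hQhneg2, hQhJJ, hQhJJ]
    rw [hQhsymm z y]
    ring
  have hτ0 : τ = ((n:ℝ)+1)/2 * t0 := by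
    rw [hτ]
    have hterm2 : ∀ i, ε i * S (e i) (e i)
        = (1/8) * (2*(n:ℝ)+4) * (ε i * Qh g J R a (e i) (e i))
          + (1/8) * t0 * (ε i * ε i) := by
      intro i
      rw [hSQ, hgii]
      ring
    rw [Finset.sum_congr rfl (fun i _ => hterm2 i), Finset.sum_add_distrib,
      ← Finset.mul_sum, ← Finset.mul_sum, hA1, ← ht0def]
    ring
  have hn1 : ((n:ℝ)+1) ≠ 0 := by positivity
  have hn2 : ((n:ℝ)+2) ≠ 0 := by positivity
  have hQS' : ∀ y z, ((n:ℝ)+1) * ((n:ℝ)+2) * Qh g J R a y z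
      = 4*((n:ℝ)+1) * S y z - τ * g y z := by
    intro y z
    linear_combination (-(4:ℝ)*((n:ℝ)+1)) * hSQ y z + g y z * hτ0
  have hQSdiv : ∀ p q, Qh g J R a p q
      = 4/((n:ℝ)+2) * S p q - τ/(((n:ℝ)+1)*((n:ℝ)+2)) * g p q := by
    intro p q
    have h := hQS' p q
    have h2 : Qh g J R a p q
        = (4*((n:ℝ)+1) * S p q - τ * g p q) / (((n:ℝ)+1)*((n:ℝ)+2)) := by
      rw [eq_div_iff (mul_ne_zero hn1 hn2)]
      linear_combination h
    rw [h2]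
    field_simp
  intro x y z u
  rw [hRM x y z u]
  simp only [Mdl, phi, psi, pi1, pi2]
  rw [hQSdiv y z, hQSdiv y u, hQSdiv x u, hQSdiv x z]
  rw [hQSdiv y (J z), hQSdiv y (J u), hQSdiv z (J u), hQSdiv x (J u), hQSdiv x (J z),
    hQSdiv x (J y)]
  field_simp
  ring
end
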